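/- arXiv:2005.00855 — 2 statements merged into one kernel-verified Lean document; each statement's English description precedes it below -/
import Mathlib

section
/- For every Lie polynomial P ∈ ℚ⟨X⟩ there exists a polynomial P̃ ∈ ℚ⟨X⟩ such that P = r(P̃); equivalently, every Lie polynomial lies in the image of the right-normed bracketing map r. -/
/-!
Setting: `ℚ⟨X⟩ = FreeAlgebra ℚ X`, the free associative `ℚ`-algebra on a type `X` of
non-commuting variables, with the commutator bracket `⁅P,Q⁆ = P*Q - Q*P` and canonical
inclusion `ι = FreeAlgebra.ι ℚ`.  The words (elements of `FreeMonoid X`) form a `ℚ`-basis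
`FreeAlgebra.basisFreeMonoid ℚ X` of `ℚ⟨X⟩`.
-/

/-- The right-normed bracketing of a word:
`[ι x₁,[ι x₂,[…,[ι x_{n−1}, ι xₙ]…]]]`, with the empty word mapped to `0`. -/
noncomputable def rword {X : Type*} : List X → FreeAlgebra ℚ X
  | [] => 0
  | [x] => FreeAlgebra.ι ℚ x
  | x :: y :: ys => ⁅FreeAlgebra.ι ℚ x, rword (y :: ys)⁆

/-- The right-normed bracketing map `r : ℚ⟨X⟩ → ℚ⟨X⟩`: the unique `ℚ`-linear map sending the
basis word `w₁w₂⋯wₙ` to `[ι w₁,[ι w₂,[…,[ι w_{n−1}, ι wₙ]…]]]` (and the empty word `1` to `0`,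
and a single letter `x` to `ι x`). -/
noncomputable def rmap (X : Type*) : FreeAlgebra ℚ X →ₗ[ℚ] FreeAlgebra ℚ X :=
  (FreeAlgebra.basisFreeMonoid ℚ X).constr ℚ fun w => rword w.toList

/-- The coefficient of the word `w` in `P`, with respect to the basis of words of `ℚ⟨X⟩`. -/
noncomputable def coeffWord {X : Type*} (P : FreeAlgebra ℚ X) (w : FreeMonoid X) : ℚ :=
  (FreeAlgebra.basisFreeMonoid ℚ X).repr P w

attribute [local instance 100] LieRing.ofAssociativeRing

/-- `P` is a Lie polynomial: it belongs to the Lie subalgebra of `ℚ⟨X⟩` (under the commutator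
bracket) generated by the image of `ι`, i.e. the smallest `ℚ`-subspace of `ℚ⟨X⟩` containing
`ι(X)` and closed under commutators. -/
def IsLiePolynomial {X : Type*} (P : FreeAlgebra ℚ X) : Prop :=
  P ∈ LieSubalgebra.lieSpan ℚ (FreeAlgebra ℚ X) (Set.range (FreeAlgebra.ι ℚ))

/-- `P` is homogeneous of degree `n`: a `ℚ`-linear combination of words of length `n`. -/
def IsHomogeneous {X : Type*} (n : ℕ) (P : FreeAlgebra ℚ X) : Prop :=
  P ∈ Submodule.span ℚ
    ((fun w : List X => (w.map (FreeAlgebra.ι ℚ)).prod) '' {w : List X | w.length = n})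

/-- The span of all right-normed bracketings of words. -/
noncomputable def Srw (X : Type*) : Submodule ℚ (FreeAlgebra ℚ X) :=
  Submodule.span ℚ (Set.range (rword (X := X)))

lemma rword_cons {X : Type*} (x : X) {v : List X} (hv : v ≠ []) :
    rword (x :: v) = ⁅FreeAlgebra.ι ℚ x, rword v⁆ := by
  cases v with
  | nil => simp at hv
  | cons y ys => rfl

lemma ad_mem_Srw {X : Type*} (x : X) {p : FreeAlgebra ℚ X} (hp : p ∈ Srw X) :
    ⁅FreeAlgebra.ι ℚ x, p⁆ ∈ Srw X := by
  induction hp using Submodule.span_induction with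
  | mem q hq =>
    obtain ⟨w, rfl⟩ := hq
    cases w with
    | nil => simp [rword]
    | cons y ys =>
      rw [← rword_cons x (by simp)]
      exact Submodule.subset_span ⟨x :: y :: ys, rfl⟩
  | zero => simp
  | add p q _ _ hp hq => rw [lie_add]; exact Submodule.add_mem _ hp hq
  | smul c p _ hp => rw [lie_smul]; exact Submodule.smul_mem _ _ hp

lemma rword_lie_mem {X : Type*} : ∀ (u v : List X), ⁅rword u, rword v⁆ ∈ Srw X := by
  intro u
  induction u with
  | nil => intro v; simp [rword]
  | cons x u' ih =>
    intro v
    cases u' with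
    | nil =>
      cases v with
      | nil => simp [rword]
      | cons y ys =>
        show ⁅FreeAlgebra.ι ℚ x, rword (y :: ys)⁆ ∈ Srw X
        exact ad_mem_Srw x (Submodule.subset_span ⟨y :: ys, rfl⟩)
    | cons z zs =>
      rw [rword_cons x (by simp), lie_lie]
      refine Submodule.sub_mem _ (ad_mem_Srw x (ih v)) ?_
      cases v with
      | nil => simp [rword]
      | cons y ys =>
        rw [← rword_cons x (by simp)]
        exact ih (x :: y :: ys)

lemma lie_mem_Srw {X : Type*} {p q : FreeAlgebra ℚ X} (hp : p ∈ Srw X) (hq : q ∈ Srw X) :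
    ⁅p, q⁆ ∈ Srw X := by
  induction hp using Submodule.span_induction with
  | mem a ha =>
    obtain ⟨u, rfl⟩ := ha
    induction hq using Submodule.span_induction with
    | mem b hb => obtain ⟨v, rfl⟩ := hb; exact rword_lie_mem u v
    | zero => simp
    | add b c _ _ hb hc => rw [lie_add]; exact Submodule.add_mem _ hb hc
    | smul t b _ hb => rw [lie_smul]; exact Submodule.smul_mem _ _ hb
  | zero => simp
  | add a b _ _ ha hb => rw [add_lie]; exact Submodule.add_mem _ ha hb
  | smul t a _ ha => rw [smul_lie]; exact Submodule.smul_mem _ _ ha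

/-- Every Lie polynomial lies in the image of the right-normed bracketing map `r`. -/
theorem stmt_7 {X : Type*} (P : FreeAlgebra ℚ X) (hLie : IsLiePolynomial P) :
    ∃ Ptilde : FreeAlgebra ℚ X, P = rmap X Ptilde := by
  have hrange : LinearMap.range (rmap X) = Srw X := by
    rw [rmap, Module.Basis.constr_range]
    congr 1
  -- `Srw` is a Lie subalgebra
  let L : LieSubalgebra ℚ (FreeAlgebra ℚ X) :=
    { toSubmodule := Srw X
      lie_mem' := fun hp hq => lie_mem_Srw hp hq }
  have hsub : Set.range (FreeAlgebra.ι ℚ (X := X)) ⊆ L := by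
    rintro _ ⟨x, rfl⟩
    have : rword [x] = FreeAlgebra.ι ℚ x := rfl
    exact this ▸ Submodule.subset_span ⟨[x], rfl⟩
  have hP : P ∈ Srw X :=
    LieSubalgebra.lieSpan_le.mpr hsub hLie
  rw [← hrange] at hP
  obtain ⟨Ptilde, hPt⟩ := hP
  exact ⟨Ptilde, hPt.symm⟩
end

section
/- Let a ∈ X, let n ≥ 1, and let P ∈ ℚ⟨X⟩ be homogeneous of degree n (a ℚ-linear combination of words of length n) with the coefficient of the word a^n in P equal to zero. If [ι a, P] is a Lie polynomial, then [ι a, P] = −r(P · ι a). -/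
attribute [local instance 100] LieRing.ofAssociativeRing

open scoped Classical

section Aux

variable {X : Type*}

local notation "A" => FreeAlgebra ℚ X
local notation "ι" => FreeAlgebra.ι ℚ
local notation "B" => FreeAlgebra.basisFreeMonoid ℚ X

lemma aux_single_prod (l : List X) :
    (l.map (fun x => (MonoidAlgebra.single (FreeMonoid.of x) 1 : MonoidAlgebra ℚ (FreeMonoid X)))).prod
      = MonoidAlgebra.single (FreeMonoid.ofList l) 1 := by
  induction l with
  | nil =>
    simp only [List.map_nil, List.prod_nil]
    rw [MonoidAlgebra.one_def]
    rfl
  | cons x t ih =>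
    simp only [List.map_cons, List.prod_cons, ih, MonoidAlgebra.single_mul_single, one_mul]
    rfl

lemma aux_basis_eq_prod (w : FreeMonoid X) :
    B w = ((FreeMonoid.toList w).map (FreeAlgebra.ι ℚ)).prod := by
  apply (FreeAlgebra.equivMonoidAlgebraFreeMonoid (R := ℚ) (X := X)).injective
  rw [show (FreeAlgebra.equivMonoidAlgebraFreeMonoid (R := ℚ) (X := X)) ((FreeMonoid.toList w).map (FreeAlgebra.ι ℚ)).prod = _ from map_list_prod _ _]
  rw [List.map_map]
  have h1 : ⇑(FreeAlgebra.equivMonoidAlgebraFreeMonoid (R := ℚ) (X := X)) ∘ FreeAlgebra.ι ℚ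
      = fun x => MonoidAlgebra.single (FreeMonoid.of x) 1 := by
    funext x
    simp [FreeAlgebra.equivMonoidAlgebraFreeMonoid, MonoidAlgebra.of_apply]
  rw [h1, aux_single_prod]
  simp only [FreeAlgebra.basisFreeMonoid, Module.Basis.map_apply, Finsupp.coe_basisSingleOne]
  rw [FreeMonoid.ofList_toList]
  exact AlgEquiv.apply_symm_apply _ _

lemma aux_basis_mul (v w : FreeMonoid X) : (B v) * (B w) = B (v * w) := by
  simp only [aux_basis_eq_prod, FreeMonoid.toList_mul, List.map_append, List.prod_append]

lemma aux_basis_of (x : X) : B (FreeMonoid.of x) = ι x := by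
  rw [aux_basis_eq_prod, FreeMonoid.toList_of]
  simp

lemma aux_ofList_inj {l₁ l₂ : List X} (h : FreeMonoid.ofList l₁ = FreeMonoid.ofList l₂) :
    l₁ = l₂ := by
  have := congrArg FreeMonoid.toList h
  simpa [FreeMonoid.toList_ofList] using this

lemma aux_coeff_basis (v w : FreeMonoid X) :
    coeffWord (B v) w = if w = v then 1 else 0 := by
  rw [coeffWord, Module.Basis.repr_self, Finsupp.single_apply]
  by_cases h : w = v
  · subst h; simp
  · rw [if_neg (fun hh => h hh.symm), if_neg h]

lemma aux_coeff_add (P Q : A) (w : FreeMonoid X) :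
    coeffWord (P + Q) w = coeffWord P w + coeffWord Q w := by
  simp [coeffWord]

lemma aux_coeff_smul (c : ℚ) (P : A) (w : FreeMonoid X) :
    coeffWord (c • P) w = c * coeffWord P w := by
  simp [coeffWord]

/-- The "adjoint representation" algebra map. -/
noncomputable def adL (X : Type*) : FreeAlgebra ℚ X →ₐ[ℚ] Module.End ℚ (FreeAlgebra ℚ X) :=
  FreeAlgebra.lift ℚ fun x =>
    LinearMap.mulLeft ℚ (FreeAlgebra.ι ℚ x) - LinearMap.mulRight ℚ (FreeAlgebra.ι ℚ x)

lemma adL_ι (x : X) (z : A) : adL X (ι x) z = (ι x) * z - z * (ι x) := by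
  rw [adL, FreeAlgebra.lift_ι_apply]
  simp

lemma adL_lie {Q : A} (hQ : IsLiePolynomial Q) (z : A) :
    adL X Q z = Q * z - z * Q := by
  let S : LieSubalgebra ℚ A :=
    { carrier := {Q : A | ∀ z, adL X Q z = Q * z - z * Q}
      add_mem' := by
        intro P R hP hR z
        simp only [map_add, LinearMap.add_apply, hP z, hR z]
        noncomm_ring
      zero_mem' := by intro z; simp
      smul_mem' := by
        intro c P hP z
        simp only [map_smul, LinearMap.smul_apply, hP z, smul_sub, smul_mul_assoc,
          mul_smul_comm]
      lie_mem' := by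
        intro P R hP hR z
        simp only [Ring.lie_def, map_sub, map_mul, LinearMap.sub_apply, Module.End.mul_apply]
        rw [hR z, hP z, hP (R * z - z * R), hR (P * z - z * P)]
        noncomm_ring }
  have hle : LieSubalgebra.lieSpan ℚ A (Set.range (FreeAlgebra.ι ℚ)) ≤ S := by
    rw [LieSubalgebra.lieSpan_le]
    rintro _ ⟨x, rfl⟩ z
    exact adL_ι x z
  exact hle hQ z

lemma rword_cons_s11 (x : X) (l : List X) (h : l ≠ []) :
    rword (x :: l) = ⁅ι x, rword l⁆ := by
  cases l with
  | nil => exact absurd rfl h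
  | cons y ys => rfl

lemma adL_prod_apply (a : X) (l : List X) :
    adL X ((l.map (FreeAlgebra.ι ℚ)).prod) (ι a) = rword (l ++ [a]) := by
  induction l with
  | nil => simp [rword]
  | cons x t ih =>
    simp only [List.map_cons, List.prod_cons, map_mul, Module.End.mul_apply, ih]
    rw [List.cons_append, rword_cons_s11 x (t ++ [a]) (by simp)]
    rw [adL_ι]
    simp [Ring.lie_def]

lemma rmap_basis (w : FreeMonoid X) : rmap X (B w) = rword w.toList :=
  Module.Basis.constr_basis _ _ _ _

lemma rmap_mul_ι (a : X) (P : A) :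
    rmap X (P * ι a) = adL X P (ι a) := by
  have : (rmap X).comp (LinearMap.mulRight ℚ (ι a))
      = (LinearMap.applyₗ ((ι a) : A)).comp (adL X).toLinearMap := by
    apply (FreeAlgebra.basisFreeMonoid ℚ X).ext
    intro w
    simp only [LinearMap.coe_comp, Function.comp_apply, LinearMap.mulRight_apply,
      LinearMap.applyₗ_apply_apply, AlgHom.toLinearMap_apply]
    rw [show (B w) * ι a = B (w * FreeMonoid.of a) by rw [← aux_basis_of a, aux_basis_mul]]
    rw [rmap_basis, aux_basis_eq_prod w, adL_prod_apply]
    congr 1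
  exact DFunLike.congr_fun this P

/-- evaluation sending `a ↦ X` and every other letter to `0`. -/
noncomputable def toPoly (a : X) : FreeAlgebra ℚ X →ₐ[ℚ] Polynomial ℚ :=
  FreeAlgebra.lift ℚ fun x => if x = a then Polynomial.X else 0

lemma toPoly_prod (a : X) (l : List X) :
    toPoly a ((l.map (FreeAlgebra.ι ℚ)).prod)
      = if ∀ x ∈ l, x = a then Polynomial.X ^ l.length else 0 := by
  induction l with
  | nil => simp
  | cons x t ih =>
    simp only [List.map_cons, List.prod_cons, map_mul, ih]
    rw [show (toPoly a) (FreeAlgebra.ι ℚ x) = if x = a then Polynomial.X else 0 from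
      FreeAlgebra.lift_ι_apply _ _]
    by_cases hx : x = a <;> by_cases ht : ∀ y ∈ t, y = a <;>
      simp [hx, ht, List.forall_mem_cons, pow_succ, mul_comm]

lemma coeff_eq_poly (a : X) (m : ℕ) (P : A) :
    coeffWord P (FreeMonoid.ofList (List.replicate m a)) = (toPoly a P).coeff m := by
  have : ((FreeAlgebra.basisFreeMonoid ℚ X).coord (FreeMonoid.ofList (List.replicate m a)))
      = (Polynomial.lcoeff ℚ m).comp (toPoly a).toLinearMap := by
    apply (FreeAlgebra.basisFreeMonoid ℚ X).ext
    intro w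
    simp only [Module.Basis.coord_apply, Module.Basis.repr_self, LinearMap.coe_comp, Function.comp_apply,
      AlgHom.toLinearMap_apply, Polynomial.lcoeff_apply]
    rw [aux_basis_eq_prod w, toPoly_prod]
    rw [Finsupp.single_apply]
    by_cases hall : ∀ x ∈ w.toList, x = a
    · rw [if_pos hall, Polynomial.coeff_X_pow]
      by_cases hm : w.toList.length = m
      · have h2 : FreeMonoid.toList w = List.replicate m a :=
          List.eq_replicate_iff.mpr ⟨hm, hall⟩
        rw [if_pos (by rw [← h2, FreeMonoid.ofList_toList]), if_pos hm.symm]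
      · rw [if_neg, if_neg (fun h => hm h.symm)]
        intro h
        apply hm
        have := congrArg (fun v => (FreeMonoid.toList v).length) h
        simp only [FreeMonoid.toList_ofList, List.length_replicate] at this
        exact this
    · rw [if_neg hall, if_neg, Polynomial.coeff_zero]
      intro h
      apply hall
      have h2 := congrArg FreeMonoid.toList h
      simp only [FreeMonoid.toList_ofList] at h2
      rw [h2]
      intro x hx
      exact (List.eq_of_mem_replicate hx)
  exact DFunLike.congr_fun this P

lemma coeff_of_homogeneous {n : ℕ} {P : A} (hP : IsHomogeneous n P) (w : FreeMonoid X)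
    (hw : w.toList.length ≠ n) : coeffWord P w = 0 := by
  induction hP using Submodule.span_induction with
  | mem x hx =>
    obtain ⟨l, hl, rfl⟩ := hx
    have hb : (fun w : List X => (List.map (FreeAlgebra.ι ℚ) w).prod) l
        = B (FreeMonoid.ofList l) := by
      rw [aux_basis_eq_prod]
      simp
    rw [hb, aux_coeff_basis, if_neg]
    intro h
    subst h
    exact hw hl
  | zero => simp [coeffWord]
  | add x y _ _ hx hy => rw [aux_coeff_add, hx, hy, add_zero]
  | smul c x _ hx => rw [aux_coeff_smul, hx, mul_zero]


lemma aux_mk_inj {u v : FreeMonoid X} : u = v ↔ u.toList = v.toList :=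
  ⟨fun h => congrArg _ h, fun h => by
    rw [← FreeMonoid.ofList_toList u, ← FreeMonoid.ofList_toList v, h]⟩

lemma coeff_mulL (a : X) (Z : A) (l : List X) :
    coeffWord ((ι a) * Z) (FreeMonoid.ofList (a :: l)) = coeffWord Z (FreeMonoid.ofList l) := by
  have h : ((FreeAlgebra.basisFreeMonoid ℚ X).coord (FreeMonoid.ofList (a :: l))).comp
        (LinearMap.mulLeft ℚ ((ι a) : A))
      = (FreeAlgebra.basisFreeMonoid ℚ X).coord (FreeMonoid.ofList l) := by
    apply (FreeAlgebra.basisFreeMonoid ℚ X).ext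
    intro v
    simp only [LinearMap.coe_comp, Function.comp_apply, LinearMap.mulLeft_apply,
      Module.Basis.coord_apply]
    rw [show (ι a) * B v = B (FreeMonoid.of a * v) by rw [← aux_basis_of a, aux_basis_mul]]
    rw [Module.Basis.repr_self, Module.Basis.repr_self, Finsupp.single_apply, Finsupp.single_apply]
    have key : (FreeMonoid.of a * v = FreeMonoid.ofList (a :: l)) ↔ v = FreeMonoid.ofList l := by
      constructor
      · intro h
        rw [aux_mk_inj] at h ⊢
        simpa [FreeMonoid.toList_mul, FreeMonoid.toList_of, FreeMonoid.toList_ofList] using h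
      · rintro rfl
        rfl
    by_cases hv : v = FreeMonoid.ofList l
    · rw [if_pos (key.mpr hv), if_pos hv]
    · rw [if_neg (fun hh => hv (key.mp hh)), if_neg hv]
  exact DFunLike.congr_fun h Z

lemma coeff_mulR (a : X) (Z : A) (l : List X) :
    coeffWord (Z * (ι a)) (FreeMonoid.ofList (l ++ [a])) = coeffWord Z (FreeMonoid.ofList l) := by
  have h : ((FreeAlgebra.basisFreeMonoid ℚ X).coord (FreeMonoid.ofList (l ++ [a]))).comp
        (LinearMap.mulRight ℚ ((ι a) : A))
      = (FreeAlgebra.basisFreeMonoid ℚ X).coord (FreeMonoid.ofList l) := by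
    apply (FreeAlgebra.basisFreeMonoid ℚ X).ext
    intro v
    simp only [LinearMap.coe_comp, Function.comp_apply, LinearMap.mulRight_apply,
      Module.Basis.coord_apply]
    rw [show (B v) * (ι a) = B (v * FreeMonoid.of a) by rw [← aux_basis_of a, aux_basis_mul]]
    rw [Module.Basis.repr_self, Module.Basis.repr_self, Finsupp.single_apply, Finsupp.single_apply]
    have key : (v * FreeMonoid.of a = FreeMonoid.ofList (l ++ [a])) ↔ v = FreeMonoid.ofList l := by
      constructor
      · intro h
        rw [aux_mk_inj] at h ⊢
        simpa [FreeMonoid.toList_mul, FreeMonoid.toList_of, FreeMonoid.toList_ofList] using h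
      · rintro rfl
        rfl
    by_cases hv : v = FreeMonoid.ofList l
    · rw [if_pos (key.mpr hv), if_pos hv]
    · rw [if_neg (fun hh => hv (key.mp hh)), if_neg hv]
  exact DFunLike.congr_fun h Z

lemma coeff_mulR_ne (a : X) (Z : A) (l : List X) (hl : l.getLast? ≠ some a) :
    coeffWord (Z * (ι a)) (FreeMonoid.ofList l) = 0 := by
  have h : ((FreeAlgebra.basisFreeMonoid ℚ X).coord (FreeMonoid.ofList l)).comp
        (LinearMap.mulRight ℚ ((ι a) : A)) = 0 := by
    apply (FreeAlgebra.basisFreeMonoid ℚ X).ext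
    intro v
    simp only [LinearMap.coe_comp, Function.comp_apply, LinearMap.mulRight_apply,
      Module.Basis.coord_apply, LinearMap.zero_apply]
    rw [show (B v) * (ι a) = B (v * FreeMonoid.of a) by rw [← aux_basis_of a, aux_basis_mul]]
    rw [Module.Basis.repr_self, Finsupp.single_apply, if_neg]
    intro hh
    apply hl
    have := congrArg FreeMonoid.toList hh
    simp only [FreeMonoid.toList_mul, FreeMonoid.toList_of, FreeMonoid.toList_ofList] at this
    rw [← this, List.getLast?_append]
    rfl
  exact DFunLike.congr_fun h Z

/-- Key step: if `ι a` commutes with `Z`, coefficients shift. -/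
lemma coeff_shift {a : X} {Z : A} (hc : (ι a) * Z = Z * (ι a)) (l : List X) :
    coeffWord Z (FreeMonoid.ofList (l ++ [a])) = coeffWord Z (FreeMonoid.ofList (a :: l)) := by
  have h1 := coeff_mulL a Z (l ++ [a])
  rw [hc] at h1
  rw [← h1, show a :: (l ++ [a]) = (a :: l) ++ [a] by simp, coeff_mulR]

lemma coeff_lastne {a : X} {Z : A} (hc : (ι a) * Z = Z * (ι a)) (l : List X) (hne : l ≠ [])
    (hl : l.getLast? ≠ some a) : coeffWord Z (FreeMonoid.ofList l) = 0 := by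
  have h1 := coeff_mulL a Z l
  rw [hc] at h1
  rw [← h1, coeff_mulR_ne]
  cases l with
  | nil => exact absurd rfl hne
  | cons y t => rw [List.getLast?_cons_cons]; exact hl

lemma coeff_tail {a : X} {Z : A} (hc : (ι a) * Z = Z * (ι a)) (k : ℕ) :
    ∀ (s : List X) (b : X), b ≠ a →
      coeffWord Z (FreeMonoid.ofList (s ++ b :: List.replicate k a)) = 0 := by
  induction k with
  | zero =>
    intro s b hb
    apply coeff_lastne hc _ (by simp)
    rw [List.replicate_zero, List.getLast?_append]
    simp [hb]
  | succ k ih =>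
    intro s b hb
    have hrw : s ++ b :: List.replicate (k+1) a
        = (s ++ b :: List.replicate k a) ++ [a] := by
      rw [List.replicate_succ' (n := k)]
      simp
    rw [hrw, coeff_shift hc, show a :: (s ++ b :: List.replicate k a)
      = (a :: s) ++ b :: List.replicate k a from rfl]
    exact ih (a :: s) b hb

lemma list_decomp (a : X) (l : List X) :
    (∃ m, l = List.replicate m a) ∨
      ∃ s b k, b ≠ a ∧ l = s ++ b :: List.replicate k a := by
  induction l using List.reverseRecOn with
  | nil => exact Or.inl ⟨0, rfl⟩
  | append_singleton t x ih =>
    by_cases hx : x = a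
    · subst hx
      rcases ih with ⟨m, rfl⟩ | ⟨s, b, k, hb, rfl⟩
      · exact Or.inl ⟨m + 1, by rw [← List.replicate_succ' (n := m)]⟩
      · refine Or.inr ⟨s, b, k + 1, hb, ?_⟩
        simp [List.replicate_succ' (n := k)]
    · exact Or.inr ⟨t, x, 0, hx, by simp⟩

lemma main_zero {a : X} {Z : A} (hc : (ι a) * Z = Z * (ι a))
    (hall : ∀ m, coeffWord Z (FreeMonoid.ofList (List.replicate m a)) = 0) : Z = 0 := by
  have hrepr : (FreeAlgebra.basisFreeMonoid ℚ X).repr Z = 0 := by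
    ext w
    rw [Finsupp.coe_zero, Pi.zero_apply, ← FreeMonoid.ofList_toList w]
    rcases list_decomp a w.toList with ⟨m, hm⟩ | ⟨s, b, k, hb, hm⟩
    · rw [hm]; exact hall m
    · rw [hm]; exact coeff_tail hc k s b hb
  have := congrArg (FreeAlgebra.basisFreeMonoid ℚ X).repr.symm hrepr
  simpa using this


lemma toPoly_rmap (a : X) (P : A) :
    toPoly a (rmap X (P * (ι a))) = coeffWord P 1 • Polynomial.X := by
  have h : (toPoly a).toLinearMap ∘ₗ rmap X ∘ₗ LinearMap.mulRight ℚ ((ι a) : A)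
      = LinearMap.toSpanSingleton ℚ _ Polynomial.X ∘ₗ
          (FreeAlgebra.basisFreeMonoid ℚ X).coord 1 := by
    apply (FreeAlgebra.basisFreeMonoid ℚ X).ext
    intro w
    simp only [LinearMap.coe_comp, Function.comp_apply, LinearMap.mulRight_apply,
      AlgHom.toLinearMap_apply, Module.Basis.coord_apply, Module.Basis.repr_self,
      LinearMap.toSpanSingleton_apply]
    rw [show (B w) * (ι a) = B (w * FreeMonoid.of a) by rw [← aux_basis_of a, aux_basis_mul],
      rmap_basis]
    rw [show FreeMonoid.toList (w * FreeMonoid.of a) = FreeMonoid.toList w ++ [a] from rfl]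
    rw [Finsupp.single_apply]
    cases hw : FreeMonoid.toList w with
    | nil =>
      have hw1 : w = 1 := by
        rw [aux_mk_inj, hw]
        rfl
      rw [if_pos hw1, List.nil_append,
        show rword [a] = (ι a : A) from rfl,
        show (toPoly a) ((ι a : A)) = if a = a then Polynomial.X else 0 from
          FreeAlgebra.lift_ι_apply _ _]
      simp
    | cons x t =>
      rw [List.cons_append, rword_cons_s11 x (t ++ [a]) (by simp), if_neg, Ring.lie_def,
        map_sub, map_mul, map_mul, mul_comm, sub_self, zero_smul]
      intro hw1
      rw [hw1] at hw
      exact absurd hw.symm (List.cons_ne_nil x t)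
  exact DFunLike.congr_fun h P

theorem stmt_11' (a : X) (n : ℕ) (hn : 1 ≤ n) (P : FreeAlgebra ℚ X)
    (hHom : IsHomogeneous n P)
    (hcoeff : coeffWord P (FreeMonoid.ofList (List.replicate n a)) = 0)
    (hLie : IsLiePolynomial ⁅FreeAlgebra.ι ℚ a, P⁆) :
    ⁅FreeAlgebra.ι ℚ a, P⁆ = -(rmap X (P * FreeAlgebra.ι ℚ a)) := by
  set Q : A := ⁅FreeAlgebra.ι ℚ a, P⁆ with hQdef
  set R : A := rmap X (P * FreeAlgebra.ι ℚ a) with hRdef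
  have e2 : adL X Q (ι a) = Q * (ι a) - (ι a) * Q := adL_lie hLie (ι a)
  have e1 : adL X Q (ι a) = (ι a) * R - R * (ι a) := by
    rw [hQdef, Ring.lie_def, map_sub, map_mul, map_mul]
    simp only [LinearMap.sub_apply, Module.End.mul_apply]
    rw [hRdef, rmap_mul_ι, show adL X (ι a) ((ι a : A)) = 0 by rw [adL_ι]; exact sub_self _,
      map_zero, adL_ι, sub_zero]
  have h3 : Q * (ι a) - (ι a) * Q = (ι a) * R - R * (ι a) := e2.symm.trans e1
  have hcomm : (ι a) * (Q + R) = (Q + R) * (ι a) := by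
    have h4 : (ι a) * (Q + R) - (Q + R) * (ι a)
        = ((ι a) * R - R * (ι a)) - (Q * (ι a) - (ι a) * Q) := by noncomm_ring
    rw [← h3, sub_self] at h4
    exact sub_eq_zero.mp h4
  have hall : ∀ m, coeffWord (Q + R) (FreeMonoid.ofList (List.replicate m a)) = 0 := by
    intro m
    rw [coeff_eq_poly, map_add]
    have hQ0 : toPoly a Q = 0 := by
      rw [hQdef, Ring.lie_def, map_sub, map_mul, map_mul, mul_comm, sub_self]
    have hR0 : toPoly a R = 0 := by
      rw [hRdef, toPoly_rmap, coeff_of_homogeneous hHom 1 (by simp only [FreeMonoid.toList_one, List.length_nil]; omega),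
        zero_smul]
    rw [hQ0, hR0, add_zero, Polynomial.coeff_zero]
  have hz : Q + R = 0 := main_zero hcomm hall
  exact eq_neg_of_add_eq_zero_left hz

end Aux

/-- If `P` is homogeneous of degree `n ≥ 1` with vanishing coefficient of `a^n`, and
`[ι a, P]` is a Lie polynomial, then `[ι a, P] = −r(P · ι a)`. -/
theorem stmt_11 {X : Type*} (a : X) (n : ℕ) (hn : 1 ≤ n) (P : FreeAlgebra ℚ X)
    (hHom : IsHomogeneous n P)
    (hcoeff : coeffWord P (FreeMonoid.ofList (List.replicate n a)) = 0)
    (hLie : IsLiePolynomial ⁅FreeAlgebra.ι ℚ a, P⁆) :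
    ⁅FreeAlgebra.ι ℚ a, P⁆ = -(rmap X (P * FreeAlgebra.ι ℚ a)) :=
  stmt_11' a n hn P hHom hcoeff hLie
end
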